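/- Let α be a 2-cocycle on the Lie algebra D₁ (basis L(x)=t^x∂, I(x)=t^x, x ∈ A, bracket [L(x),L(y)]=∂(y−x)L(x+y), [L(x),I(y)]=∂(y)I(x+y), [I(x),I(y)]=0, with ∂ nondegenerate additive). Then ∂(x)·α(I(z+x), I(y)) = ∂(y)·α(I(z+y), I(x)) for all x, y, z ∈ A, and consequently α(I(x),I(y)) = 0 whenever x + y ≠ 0. -/
import Mathlib


/-- For any 2-cocycle `α` on the Lie algebra `D₁` (with basis `L x = t^x ∂`, `I x = t^x`),
we have `∂(x)·α(I(z+x), I(y)) = ∂(y)·α(I(z+y), I(x))`, and consequently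
`α(I x, I y) = 0` whenever `x + y ≠ 0`. -/
theorem stmt_6 {F : Type*} [Field F] [CharZero F]
    {A : Type*} [AddCommGroup A]
    (d : A →+ F) (hd : ∀ x : A, d x = 0 → x = 0)
    {D : Type*} [LieRing D] [LieAlgebra F D]
    (L I : A → D)
    (hLL : ∀ x y : A, ⁅L x, L y⁆ = d (y - x) • L (x + y))
    (hLI : ∀ x y : A, ⁅L x, I y⁆ = d y • I (x + y))
    (hII : ∀ x y : A, ⁅I x, I y⁆ = 0)
    (α : D →ₗ[F] D →ₗ[F] F)
    (hAlt : ∀ u : D, α u u = 0)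
    (hCoc : ∀ u v w : D, α ⁅u, v⁆ w + α ⁅v, w⁆ u + α ⁅w, u⁆ v = 0) :
    (∀ x y z : A, d x * α (I (z + x)) (I y) = d y * α (I (z + y)) (I x)) ∧
    (∀ x y : A, x + y ≠ 0 → α (I x) (I y) = 0) := by
  have hskew : ∀ u v : D, α u v = -(α v u) := by
    intro u v
    have h := hAlt (u + v)
    simp only [map_add, LinearMap.add_apply, hAlt] at h
    linear_combination h
  have key : ∀ x y z : A, d x * α (I (z + x)) (I y) = d y * α (I (z + y)) (I x) := by
    intro x y z
    have h := hCoc (L z) (I x) (I y)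
    rw [hLI, hII, show (⁅I y, L z⁆ : D) = -⁅L z, I y⁆ by
      rw [← lie_skew (L z) (I y), neg_neg], hLI] at h
    simp only [map_smul, map_zero, map_neg, LinearMap.smul_apply, LinearMap.zero_apply,
      LinearMap.neg_apply, smul_eq_mul] at h
    have h2 := hskew (I (z + y)) (I x)
    linear_combination h
  refine ⟨key, fun x y hxy => ?_⟩
  have h := key x y 0
  rw [zero_add, zero_add, hskew (I y) (I x)] at h
  have hne : (d x : F) + d y ≠ 0 := by
    intro h0
    exact hxy (hd _ (by rw [map_add]; exact h0))
  have : (d x + d y) * α (I x) (I y) = 0 := by linear_combination h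
  exact (mul_eq_zero.mp this).resolve_left hne
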